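/- Let M be a 2g×2g integer matrix with an Alexander-trivial subgroup of rank 2d (a rank-2d subgroup whose Gram matrix B satisfies det(t·B − Bᵀ) = ±t^d), and let e₁₁ be the 2g×2g matrix with a 1 in the top-left entry and zeros elsewhere. Then the (2g+2)×(2g+2) stabilized matrix M̃ = [[M ± e₁₁, w, 0],[0, 0, 1],[0, 0, 0]] — obtained by stabilizing M ± e₁₁ along the first coordinate as in the paper (with w having ∓1 in the first entry and 0 elsewhere) — is congruent over ℤ to a matrix admitting an Alexander-trivial subgroup of rank 2d. Consequently, changing a Seifert matrix by ±e₁₁ changes the maximal half-rank of an Alexander-trivial subgroup (after stabilization) by at most 1. -/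

import Mathlib

set_option maxRecDepth 4000

open Matrix Polynomial

/-- `det (t • M - Mᵀ)` as a polynomial in `t`. -/
noncomputable def polyDet {n : Type*} [Fintype n] [DecidableEq n]
    (M : Matrix n n ℤ) : Polynomial ℤ :=
  (Matrix.of fun i j => C (M i j) * X - C (M j i)).det

/-- extend-by-zero linear map -/
def extL (n : ℕ) : (Fin n → ℤ) →ₗ[ℤ] (Fin n ⊕ Fin 2 → ℤ) where
  toFun v := Sum.elim v 0
  map_add' v w := by funext x; cases x <;> simp
  map_smul' c v := by funext x; cases x <;> simp

theorem stmt15 (g d : ℕ) (hg : 0 < 2 * g)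
    (M : Matrix (Fin (2 * g)) (Fin (2 * g)) ℤ)
    -- an Alexander-trivial subgroup of rank 2d for M
    (u : Fin (2 * d) → (Fin (2 * g) → ℤ)) (hu : LinearIndependent ℤ u)
    (B : Matrix (Fin (2 * d)) (Fin (2 * d)) ℤ)
    (hB : ∀ i j, B i j = u i ⬝ᵥ M *ᵥ u j)
    (hBdet : polyDet B = X ^ d ∨ polyDet B = -X ^ d)
    -- the sign of the crossing change
    (ε : ℤ) (hε : ε = 1 ∨ ε = -1)
    -- the stabilized matrix [[M ± e₁₁, w, 0], [0, 0, 1], [0, 0, 0]]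
    -- with w = ∓e₁
    (Mt : Matrix (Fin (2 * g) ⊕ Fin 2) (Fin (2 * g) ⊕ Fin 2) ℤ)
    (hMt : Mt = fromBlocks
      (M + ε • Matrix.single (⟨0, hg⟩ : Fin (2 * g)) (⟨0, hg⟩ : Fin (2 * g)) (1 : ℤ))
      (Matrix.of fun i (j : Fin 2) =>
        if j = 0 then (if i = (⟨0, hg⟩ : Fin (2 * g)) then -ε else 0) else 0)
      0 !![0, 1; 0, 0]) :
    -- Mt is congruent over ℤ to a matrix admitting an
    -- Alexander-trivial subgroup of rank 2d
    ∃ T : Matrix (Fin (2 * g) ⊕ Fin 2) (Fin (2 * g) ⊕ Fin 2) ℤ, IsUnit T.det ∧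
      ∃ ut : Fin (2 * d) → (Fin (2 * g) ⊕ Fin 2 → ℤ), LinearIndependent ℤ ut ∧
        ∃ Bt : Matrix (Fin (2 * d)) (Fin (2 * d)) ℤ,
          (∀ i j, Bt i j = ut i ⬝ᵥ (Tᵀ * Mt * T) *ᵥ ut j) ∧
          (∃ k : ℕ, polyDet Bt = X ^ k ∨ polyDet Bt = -X ^ k) := by
  set T : Matrix (Fin (2 * g) ⊕ Fin 2) (Fin (2 * g) ⊕ Fin 2) ℤ :=
    fromBlocks 1 0 (Matrix.single (0 : Fin 2) (⟨0, hg⟩ : Fin (2 * g)) 1) 1 with hT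
  have hdet : IsUnit T.det := by
    rw [hT, Matrix.det_fromBlocks_zero₁₂]
    simp
  have key : ∀ a b, (Tᵀ * Mt * T) (Sum.inl a) (Sum.inl b) = M a b := by
    intro a b
    rw [hMt, hT]
    simp [Matrix.mul_apply, Fintype.sum_sum_type, Matrix.fromBlocks,
      Matrix.single, Matrix.one_apply, Fin.sum_univ_two,
      Finset.mul_sum, Finset.sum_mul]
    split_ifs <;> try ring
    · rename_i h1 h2 h3; exact absurd h1.1.symm h3
    · rename_i h1 h2; exact absurd h1.2 h2
    · rename_i h1 h2 h3; exact absurd ⟨h3.symm, h2⟩ h1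
  refine ⟨T, hdet, fun i => extL (2 * g) (u i), ?_, B, ?_, d, hBdet⟩
  · apply hu.map' (extL (2 * g))
    rw [LinearMap.ker_eq_bot]
    intro v w h
    funext x
    have := congrFun h (Sum.inl x)
    simpa [extL] using this
  · intro i j
    rw [hB]
    show _ = (Sum.elim (u i) 0 : _) ⬝ᵥ (Tᵀ * Mt * T) *ᵥ Sum.elim (u j) 0
    simp only [dotProduct, Matrix.mulVec, Fintype.sum_sum_type,
      Sum.elim_inl, Sum.elim_inr, key, Pi.zero_apply, zero_mul, mul_zero,
      Finset.sum_const_zero, add_zero]
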